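/- Let γ ∈ SL(2,ℤ) be of infinite order (γ^n ≠ 1 for all n ≥ 1), let k ≥ 1 satisfy det(1 - γ^k) ≠ 0, and let p be an integer with 1 ≤ p < k. Then the number of fixed points of multiplication by γ^p on Q_k(γ) = coker(1 - γ^k) equals |det(1 - γ^{gcd(k,p)})| = |tr(γ^{gcd(k,p)}) - 2|. -/

import Mathlib

set_option maxHeartbeats 1000000

open Matrix

local notation "SL2" => Matrix.SpecialLinearGroup (Fin 2) ℤ

lemma card_coker (M : Matrix (Fin 2) (Fin 2) ℤ) (h : M.det ≠ 0) :
    Nat.card ((Fin 2 → ℤ) ⧸ LinearMap.range (Matrix.toLin' M)) = M.det.natAbs := by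
  classical
  set f := Matrix.toLin' M with hfdef
  have hf : Function.Injective f := by
    intro x y hxy
    have h1 : (Matrix.adjugate M).mulVec (M.mulVec x) = (Matrix.adjugate M).mulVec (M.mulVec y) := by
      simpa [hfdef, Matrix.toLin'_apply] using congrArg (fun v => (Matrix.adjugate M).mulVec v) hxy
    rw [Matrix.mulVec_mulVec, Matrix.mulVec_mulVec, Matrix.adjugate_mul, Matrix.smul_mulVec,
      Matrix.smul_mulVec, Matrix.one_mulVec, Matrix.one_mulVec] at h1
    exact smul_right_injective _ h h1
  set N := LinearMap.range f with hN
  obtain ⟨n, snf⟩ := N.smithNormalForm (Pi.basisFun ℤ (Fin 2))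
  have hn : n = 2 := by
    have e : (Fin 2 → ℤ) ≃ₗ[ℤ] N := LinearEquiv.ofInjective f hf
    have h1 : Module.finrank ℤ N = n := Module.finrank_eq_card_basis snf.bN |>.trans (by simp)
    have h2 : Module.finrank ℤ N = 2 := by
      rw [← e.finrank_eq]; simp
    omega
  subst hn
  set bM := snf.bM with hbM
  let ψ : (Fin 2 → ℤ) ≃ₗ[ℤ] N := bM.equiv snf.bN (Equiv.refl _)
  set g0 : (Fin 2 → ℤ) →ₗ[ℤ] (Fin 2 → ℤ) := N.subtype ∘ₗ (ψ : (Fin 2 → ℤ) →ₗ[ℤ] N) with hg0def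
  have hperm : Function.Bijective snf.f := Finite.injective_iff_bijective.mp snf.f.injective
  let σ : Equiv.Perm (Fin 2) := Equiv.ofBijective snf.f hperm
  have hg0 : ∀ i, g0 (bM i) = snf.a i • bM (σ i) := by
    intro i
    have : g0 (bM i) = (snf.bN i : Fin 2 → ℤ) := by
      simp [hg0def, ψ, Module.Basis.equiv_apply]
    rw [this, snf.snf i]
    rfl
  have hmat : LinearMap.toMatrix bM bM g0 = (Matrix.diagonal snf.a).submatrix σ.symm id := by
    ext j i
    rw [LinearMap.toMatrix_apply, hg0 i, _root_.map_smul]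
    simp only [Module.Basis.repr_self, Finsupp.smul_single, smul_eq_mul, mul_one,
      Finsupp.single_apply, Matrix.submatrix_apply, Matrix.diagonal_apply, id]
    by_cases hji : σ.symm j = i
    · simp [hji, (Equiv.symm_apply_eq σ).mp hji]
    · have h2 : ¬ σ i = j := fun hc => hji (by simp [← hc])
      simp [hji, h2]
  have hdet0 : (LinearMap.det g0).natAbs = (∏ i, snf.a i).natAbs := by
    rw [← LinearMap.det_toMatrix bM, hmat, Matrix.det_permute]
    simp [Int.natAbs_mul, Matrix.det_diagonal]
  have hdetf : (LinearMap.det f).natAbs = (∏ i, snf.a i).natAbs := by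
    let α : (Fin 2 → ℤ) ≃ₗ[ℤ] (Fin 2 → ℤ) := (LinearEquiv.ofInjective f hf).trans ψ.symm
    have hcomp : g0 ∘ₗ (α : (Fin 2 → ℤ) →ₗ[ℤ] (Fin 2 → ℤ)) = f := by
      apply LinearMap.ext; intro v
      simp only [hg0def, α, LinearMap.coe_comp, Function.comp_apply, LinearEquiv.coe_coe,
        LinearEquiv.trans_apply, LinearEquiv.apply_symm_apply, Submodule.coe_subtype]
      exact congrArg Subtype.val (rfl : LinearEquiv.ofInjective f hf v = LinearEquiv.ofInjective f hf v) |>.trans (by simp)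
    have hdet : LinearMap.det g0 * LinearMap.det (α : (Fin 2 → ℤ) →ₗ[ℤ] (Fin 2 → ℤ))
        = LinearMap.det f := by
      rw [← LinearMap.det_comp, hcomp]
    have hu : IsUnit (LinearMap.det (α : (Fin 2 → ℤ) →ₗ[ℤ] (Fin 2 → ℤ))) :=
      LinearEquiv.isUnit_det' α
    rw [← hdet, Int.natAbs_mul, Int.natAbs_of_isUnit hu, mul_one, hdet0]
  have hidx : N.toAddSubgroup.index = (∏ i, snf.a i).natAbs := by
    rw [snf.toAddSubgroup_index_eq_pow_mul_prod]
    simp only [Fintype.card_fin, Nat.sub_self, pow_zero, one_mul,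
      Ideal.span_singleton_toAddSubgroup_eq_zmultiples, Int.index_zmultiples]
    rw [Fin.prod_univ_two, Fin.prod_univ_two, Int.natAbs_mul]
  have hcard : Nat.card ((Fin 2 → ℤ) ⧸ N) = N.toAddSubgroup.index := rfl
  rw [hcard, hidx, ← hdetf, hfdef, LinearMap.det_toLin']

lemma det_one_sub_eq (B : Matrix (Fin 2) (Fin 2) ℤ) (hB : B.det = 1) :
    (1 - B).det = 2 - B.trace := by
  have hd := hB
  rw [Matrix.det_fin_two] at hd
  rw [Matrix.det_fin_two, Matrix.trace_fin_two]
  simp only [Matrix.sub_apply, Matrix.one_apply_eq, Matrix.one_apply_ne (by decide : (0:Fin 2) ≠ 1),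
    Matrix.one_apply_ne (by decide : (1:Fin 2) ≠ 0)]
  linear_combination hd

lemma sq_of_trace_two (B : Matrix (Fin 2) (Fin 2) ℤ) (hdet : B.det = 1) (htr : B.trace = 2) :
    B * B + 1 = B + B := by
  have hd := hdet; have ht := htr
  rw [Matrix.det_fin_two] at hd
  rw [Matrix.trace_fin_two] at ht
  ext i j
  fin_cases i <;> fin_cases j <;>
    simp [Matrix.mul_apply, Fin.sum_univ_two, Matrix.add_apply, Matrix.one_apply]
  · linear_combination B 0 0 * ht - hd
  · linear_combination B 0 1 * ht
  · linear_combination B 1 0 * ht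
  · linear_combination B 1 1 * ht - hd

lemma trace_pow_of_trace_two (B : Matrix (Fin 2) (Fin 2) ℤ) (hdet : B.det = 1)
    (htr : B.trace = 2) (n : ℕ) : (B ^ n).trace = 2 := by
  suffices H : ∀ m : ℕ, (B ^ m).trace = 2 ∧ (B ^ (m + 1)).trace = 2 from (H n).1
  intro m
  induction m with
  | zero => constructor <;> simp [Matrix.trace_one, htr]
  | succ m ih =>
    refine ⟨ih.2, ?_⟩
    have key : B ^ (m + 2) + B ^ m = B ^ (m + 1) + B ^ (m + 1) := by
      have h2 := congrArg (fun C => B ^ m * C) (sq_of_trace_two B hdet htr)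
      simp only [mul_add, mul_one] at h2
      calc B ^ (m + 2) + B ^ m = B ^ m * (B * B) + B ^ m := by
              rw [pow_succ, pow_succ, mul_assoc]
        _ = B ^ m * B + B ^ m * B := h2
        _ = B ^ (m + 1) + B ^ (m + 1) := by rw [pow_succ]
    have := congrArg Matrix.trace key
    simp only [Matrix.trace_add] at this
    linarith [ih.1, ih.2]

lemma sup_ranges (γ : SL2) (k p : ℕ) :
    LinearMap.range (Matrix.toLin' (((γ ^ k : SL2) : Matrix (Fin 2) (Fin 2) ℤ) - 1)) ⊔
      LinearMap.range (Matrix.toLin' (((γ ^ p : SL2) : Matrix (Fin 2) (Fin 2) ℤ) - 1)) =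
    LinearMap.range (Matrix.toLin'
      (((γ ^ (Nat.gcd k p) : SL2) : Matrix (Fin 2) (Fin 2) ℤ) - 1)) := by
  classical
  set C : ℕ → Matrix (Fin 2) (Fin 2) ℤ := fun m => ((γ ^ m : SL2) : Matrix (Fin 2) (Fin 2) ℤ)
    with hC
  set R : ℕ → Submodule ℤ (Fin 2 → ℤ) :=
    fun m => LinearMap.range (Matrix.toLin' (C m - 1)) with hR
  show R k ⊔ R p = R (Nat.gcd k p)
  set T : Submodule ℤ (Fin 2 → ℤ) := R k ⊔ R p with hT
  have hCpow : ∀ a i : ℕ, (C a) ^ i = C (a * i) := by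
    intro a i
    simp [hC, pow_mul]
  have hCmul : ∀ a b : ℕ, C (a + b) = C a * C b := by
    intro a b; simp [hC, pow_add]
  have hcommC : ∀ a b : ℕ, Commute (C a) (C b) := by
    intro a b
    have h := (Commute.refl γ).pow_pow a b
    have h2 := congrArg (fun δ : SL2 => (δ : Matrix (Fin 2) (Fin 2) ℤ)) h
    simpa [hC, Commute, SemiconjBy] using h2
  have hfac : ∀ a q : ℕ, C (a * q) - 1 =
      (∑ i ∈ Finset.range q, (C a) ^ i) * (C a - 1) := by
    intro a q
    rw [← hCpow a q, geom_sum_mul]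
  have hfac' : ∀ a q : ℕ, C (a * q) - 1 =
      (C a - 1) * (∑ i ∈ Finset.range q, (C a) ^ i) := by
    intro a q
    rw [hfac a q]
    have hcm : Commute (∑ i ∈ Finset.range q, (C a) ^ i) (C a - 1) :=
      Commute.sum_left _ _ _ fun i _ =>
        ((Commute.pow_self (C a) i).sub_right (Commute.one_right _))
    exact hcm.eq
  have hdvd : ∀ a b : ℕ, a ∣ b → R b ≤ R a := by
    rintro a b ⟨q, rfl⟩ x hx
    obtain ⟨v, rfl⟩ := hx
    refine ⟨(∑ i ∈ Finset.range q, (C a) ^ i).mulVec v, ?_⟩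
    rw [Matrix.toLin'_apply, Matrix.toLin'_apply, Matrix.mulVec_mulVec, ← hfac']
  have hstab : ∀ D : Matrix (Fin 2) (Fin 2) ℤ, Commute D (C k) → Commute D (C p) →
      ∀ v ∈ T, D.mulVec v ∈ T := by
    intro D h1 h2 v hv
    have key : ∀ m : ℕ, Commute D (C m) → ∀ x ∈ R m, D.mulVec x ∈ R m := by
      rintro m hm x ⟨w, rfl⟩
      refine ⟨D.mulVec w, ?_⟩
      rw [Matrix.toLin'_apply, Matrix.toLin'_apply, Matrix.mulVec_mulVec, Matrix.mulVec_mulVec,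
        (hm.sub_right (Commute.one_right D)).eq]
    obtain ⟨x, hx, y, hy, rfl⟩ := Submodule.mem_sup.mp hv
    rw [Matrix.mulVec_add]
    exact Submodule.add_mem_sup (key k h1 x hx) (key p h2 y hy)
  set P : ℕ → Prop := fun m => ∀ v : Fin 2 → ℤ, (C m - 1).mulVec v ∈ T with hP
  have hPk : P k := fun v => Submodule.mem_sup_left ⟨v, Matrix.toLin'_apply _ _⟩
  have hPp : P p := fun v => Submodule.mem_sup_right ⟨v, Matrix.toLin'_apply _ _⟩
  have hPmul : ∀ a q : ℕ, P a → P (a * q) := by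
    intro a q ha v
    rw [hfac a q, ← Matrix.mulVec_mulVec]
    refine hstab _ ?_ ?_ _ (ha v)
    · exact Commute.sum_left _ _ _ fun i _ => ((hcommC a k).pow_left i)
    · exact Commute.sum_left _ _ _ fun i _ => ((hcommC a p).pow_left i)
  have hPmod : ∀ m n : ℕ, 0 < m → P m → P n → P (n % m) := by
    intro m n hm hPm hPn v
    have hn : m * (n / m) + n % m = n := Nat.div_add_mod n m
    set D : Matrix (Fin 2) (Fin 2) ℤ := (((γ ^ (m * (n / m)))⁻¹ : SL2) : Matrix (Fin 2) (Fin 2) ℤ)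
      with hD
    have hD1 : D * C (m * (n / m)) = 1 := by
      rw [hD, hC]
      rw [← Matrix.SpecialLinearGroup.coe_mul, inv_mul_cancel]
      rfl
    have hsplit : C n = C (m * (n / m)) * C (n % m) := by rw [← hCmul, hn]
    have hkey : C (n % m) - 1 = D * ((C n - 1) - (C (m * (n / m)) - 1)) := by
      have e1 : (C n - 1) - (C (m * (n / m)) - 1) = C n - C (m * (n / m)) := by
        abel
      rw [e1, hsplit, ← mul_sub_one, ← mul_assoc, hD1, one_mul]
    rw [hkey, ← Matrix.mulVec_mulVec]
    have hcomD : ∀ b : ℕ, Commute D (C b) := by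
      intro b
      have h := (((Commute.refl γ).pow_pow (m * (n / m)) b).inv_left)
      have h3 : (((γ ^ (m * (n / m)))⁻¹ * γ ^ b : SL2) : Matrix (Fin 2) (Fin 2) ℤ) =
          ((γ ^ b * (γ ^ (m * (n / m)))⁻¹ : SL2) : Matrix (Fin 2) (Fin 2) ℤ) := congrArg _ h
      rw [Matrix.SpecialLinearGroup.coe_mul, Matrix.SpecialLinearGroup.coe_mul] at h3
      exact h3
    refine hstab D (hcomD k) (hcomD p) _ ?_
    rw [Matrix.sub_mulVec]
    exact Submodule.sub_mem T (hPn v) (hPmul m (n / m) hPm v)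
  have hgcd : ∀ m n : ℕ, P m → P n → P (Nat.gcd m n) := by
    intro m n
    refine Nat.gcd.induction m n (fun n' hm hn => by simpa using hn) ?_
    intro m' n' hm' IH hPm' hPn'
    rw [Nat.gcd_rec]
    exact IH (hPmod m' n' hm' hPm' hPn') hPm'
  apply le_antisymm
  · exact sup_le (hdvd _ _ (Nat.gcd_dvd_left k p)) (hdvd _ _ (Nat.gcd_dvd_right k p))
  · rintro x ⟨v, rfl⟩
    rw [Matrix.toLin'_apply]
    exact hgcd k p hPk hPp v

/-- `Q_k(γ) = coker(1 - γ^k)`, the cokernel of `1 - γ^k` acting on `Fin 2 → ℤ`. -/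
abbrev Qk (γ : Matrix.SpecialLinearGroup (Fin 2) ℤ) (k : ℕ) :=
  (Fin 2 → ℤ) ⧸ LinearMap.range (Matrix.toLin'
    (1 - ((γ ^ k : Matrix.SpecialLinearGroup (Fin 2) ℤ) : Matrix (Fin 2) (Fin 2) ℤ)))

/-- if `γ ∈ SL(2,ℤ)` has infinite order, `det(1 - γ^k) ≠ 0` and `1 ≤ p < k`,
then the number of fixed points of multiplication by `γ^p` on `Q_k(γ)` equals
`|det(1 - γ^{gcd(k,p)})| = |tr(γ^{gcd(k,p)}) - 2|`. -/
theorem stmt6 (γ : Matrix.SpecialLinearGroup (Fin 2) ℤ)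
    (hord : ∀ n : ℕ, 1 ≤ n → γ ^ n ≠ 1)
    (k p : ℕ) (hk : 1 ≤ k)
    (hdet : (1 - ((γ ^ k : Matrix.SpecialLinearGroup (Fin 2) ℤ) :
        Matrix (Fin 2) (Fin 2) ℤ)).det ≠ 0)
    (hp : 1 ≤ p) (hpk : p < k)
    (g : Module.End ℤ (Qk γ k))
    (hg : ∀ v : Fin 2 → ℤ, g (Submodule.Quotient.mk v) =
      Submodule.Quotient.mk (Matrix.mulVec
        ((γ ^ p : Matrix.SpecialLinearGroup (Fin 2) ℤ) : Matrix (Fin 2) (Fin 2) ℤ) v)) :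
    Nat.card {x : Qk γ k // g x = x} =
        ((1 - ((γ ^ (Nat.gcd k p) : Matrix.SpecialLinearGroup (Fin 2) ℤ) :
          Matrix (Fin 2) (Fin 2) ℤ)).det).natAbs ∧
      ((1 - ((γ ^ (Nat.gcd k p) : Matrix.SpecialLinearGroup (Fin 2) ℤ) :
          Matrix (Fin 2) (Fin 2) ℤ)).det).natAbs =
        (Matrix.trace ((γ ^ (Nat.gcd k p) : Matrix.SpecialLinearGroup (Fin 2) ℤ) :
          Matrix (Fin 2) (Fin 2) ℤ) - 2).natAbs := by
  classical
  set d := Nat.gcd k p with hd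
  set Ck : Matrix (Fin 2) (Fin 2) ℤ := ((γ ^ k : SL2) : Matrix (Fin 2) (Fin 2) ℤ) with hCk
  set Cp : Matrix (Fin 2) (Fin 2) ℤ := ((γ ^ p : SL2) : Matrix (Fin 2) (Fin 2) ℤ) with hCp
  set Cd : Matrix (Fin 2) (Fin 2) ℤ := ((γ ^ d : SL2) : Matrix (Fin 2) (Fin 2) ℤ) with hCd
  have hdetCd : Cd.det = 1 := by rw [hCd]; exact (γ ^ d).prop
  -- det (1 - Cd) ≠ 0
  have hdetd : (1 - Cd).det ≠ 0 := by
    intro h0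
    rw [det_one_sub_eq Cd hdetCd] at h0
    have htr : Cd.trace = 2 := by omega
    have hk' : Ck = Cd ^ (k / d) := by
      rw [hCk, hCd, ← Matrix.SpecialLinearGroup.coe_pow, ← pow_mul,
        Nat.mul_div_cancel' (Nat.gcd_dvd_left k p)]
    have : Ck.trace = 2 := by
      rw [hk']
      exact trace_pow_of_trace_two Cd hdetCd htr _
    rw [det_one_sub_eq Ck (by rw [hCk]; exact (γ ^ k).prop), this] at hdet
    omega
  refine ⟨?_, by rw [det_one_sub_eq Cd hdetCd]; omega⟩
  -- now the cardinality
  set Rk : Submodule ℤ (Fin 2 → ℤ) := LinearMap.range (Matrix.toLin' (1 - Ck)) with hRk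
  set φ : Module.End ℤ (Qk γ k) := g - LinearMap.id with hφ
  have hfin : Finite (Qk γ k) := by
    have h1 := card_coker (1 - Ck) hdet
    exact Nat.finite_of_card_ne_zero (by
      rw [h1]; exact Int.natAbs_ne_zero.mpr hdet)
  -- fixed points = kernel of φ
  have e_fix : {x : Qk γ k // g x = x} ≃ LinearMap.ker φ :=
    Equiv.subtypeEquivRight fun x => by
      simp [hφ, LinearMap.mem_ker, LinearMap.sub_apply, sub_eq_zero]
  -- card ker = card coker
  have hkercoker : Nat.card (LinearMap.ker φ) =
      Nat.card (Qk γ k ⧸ LinearMap.range φ) := by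
    haveI : Finite (Qk γ k ⧸ LinearMap.range φ) := Quotient.finite _
    haveI : Finite (Qk γ k ⧸ LinearMap.ker φ) := Quotient.finite _
    have e1 := Submodule.card_eq_card_quotient_mul_card (LinearMap.ker φ)
    have e2 := Submodule.card_eq_card_quotient_mul_card (LinearMap.range φ)
    have e3 : Nat.card (Qk γ k ⧸ LinearMap.ker φ) = Nat.card (LinearMap.range φ) :=
      Nat.card_congr φ.quotKerEquivRange.toEquiv
    have hpos : 0 < Nat.card (LinearMap.range φ) := Nat.card_pos
    have hker : 0 < Nat.card (LinearMap.ker φ) := Nat.card_pos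
    have hq : 0 < Nat.card (Qk γ k ⧸ LinearMap.range φ) := Nat.card_pos
    rw [e3] at e1
    rw [e1] at e2
    -- e2 : card ker * card range = card range * card (Q/range)
    have := e2
    nlinarith [this]
  -- range φ as an image
  have hφmk : ∀ v : Fin 2 → ℤ, φ (Submodule.Quotient.mk v) =
      Submodule.Quotient.mk ((Cp - 1).mulVec v) := by
    intro v
    have : (Cp - 1).mulVec v = Cp.mulVec v - v := by
      rw [Matrix.sub_mulVec, Matrix.one_mulVec]
    rw [this, Submodule.Quotient.mk_sub]
    simp only [hφ, LinearMap.sub_apply, LinearMap.id_apply, hg v]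
  have hcomp : φ ∘ₗ Rk.mkQ = Rk.mkQ ∘ₗ Matrix.toLin' (Cp - 1) := by
    apply LinearMap.ext; intro v
    simp only [LinearMap.coe_comp, Function.comp_apply, Submodule.mkQ_apply,
      Matrix.toLin'_apply]
    exact hφmk v
  have hrangeφ : LinearMap.range φ =
      (LinearMap.range (Matrix.toLin' (Cp - 1))).map Rk.mkQ := by
    rw [← LinearMap.range_comp, ← hcomp,
      LinearMap.range_comp_of_range_eq_top _ (Submodule.range_mkQ Rk)]
  -- rewrite ranges with `X - 1`
  have hneg : ∀ B : Matrix (Fin 2) (Fin 2) ℤ,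
      LinearMap.range (Matrix.toLin' (B - 1)) = LinearMap.range (Matrix.toLin' (1 - B)) := by
    intro B
    have h1 : Matrix.toLin' (B - 1) = -Matrix.toLin' (1 - B) := by
      rw [show B - 1 = -(1 - B) from (neg_sub 1 B).symm]
      exact map_neg Matrix.toLin' (1 - B)
    rw [h1, LinearMap.range_neg]
  set T : Submodule ℤ (Fin 2 → ℤ) :=
    LinearMap.range (Matrix.toLin' (Ck - 1)) ⊔ LinearMap.range (Matrix.toLin' (Cp - 1)) with hTd
  have hsup : T = LinearMap.range (Matrix.toLin' (Cd - 1)) := sup_ranges γ k p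
  have hRkT : Rk ≤ T := by
    rw [hRk, ← hneg Ck]
    exact le_sup_left
  have hmapT : T.map Rk.mkQ = (LinearMap.range (Matrix.toLin' (Cp - 1))).map Rk.mkQ := by
    rw [hTd, Submodule.map_sup, hneg Ck, ← hRk, Submodule.mkQ_map_self, bot_sup_eq]
  have hrange2 : LinearMap.range φ = T.map Rk.mkQ := by rw [hrangeφ, hmapT]
  calc Nat.card {x : Qk γ k // g x = x}
      = Nat.card (LinearMap.ker φ) := Nat.card_congr e_fix
    _ = Nat.card (Qk γ k ⧸ LinearMap.range φ) := hkercoker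
    _ = Nat.card (Qk γ k ⧸ T.map Rk.mkQ) := by rw [hrange2]
    _ = Nat.card ((Fin 2 → ℤ) ⧸ T) :=
        Nat.card_congr (Submodule.quotientQuotientEquivQuotient Rk T hRkT).toEquiv
    _ = Nat.card ((Fin 2 → ℤ) ⧸ LinearMap.range (Matrix.toLin' (1 - Cd))) := by
        rw [hsup, hneg Cd]
    _ = (1 - Cd).det.natAbs := card_coker _ hdetd
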